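/- Let θ ∈ ℤ be such that for every nonzero f : ZMod N → ℂ, ‖f‖₀ + ‖f̂‖₀ ≥ N − θ. Let k, k̂ ∈ ℕ and let g : ZMod N → ℂ be a generator such that for every ℓ ∈ ZMod N, θ + 2k + 1 ≤ #{p ∈ ZMod N : ⟨g, Π_{(p,ℓ)} g⟩ ≠ 0} ≤ k̂ (as integers). Let A, B be finite subsets of ZMod N with |A| ≥ θ + (2k)² − 2k + 2 and |B| ≥ θ + k̂ + 1 (as integers). Then the system {g_λ : λ ∈ A×B} allows phase retrieval for signals k-sparse in the Fourier basis: for all x, y ∈ C_{k,F}, if |⟨x, g_λ⟩| = |⟨y, g_λ⟩| for every λ ∈ A×B, then there exists c ∈ ℂ with |c| = 1 and x = c • y. -/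

import Mathlib

open Complex Finset

/-- `gw N m = ω^m` where `ω = exp(2πi/N)` and `m : ZMod N`. -/
noncomputable def gw (N : ℕ) (m : ZMod N) : ℂ :=
  Complex.exp (2 * Real.pi * Complex.I * (m.val : ℂ) / (N : ℂ))

/-- Translation operator `(T_p x)(n) = x(n-p)`. -/
def Tr (N : ℕ) (p : ZMod N) (x : ZMod N → ℂ) : ZMod N → ℂ :=
  fun n => x (n - p)

/-- Modulation operator `(M_ℓ x)(n) = ω^{ℓ·n} x(n)`. -/
noncomputable def Md (N : ℕ) (l : ZMod N) (x : ZMod N → ℂ) : ZMod N → ℂ :=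
  fun n => gw N (l * n) * x n

/-- Time-frequency shift `Π_{(p,ℓ)} = M_ℓ ∘ T_p`. -/
noncomputable def Pig (N : ℕ) (p l : ZMod N) (x : ZMod N → ℂ) : ZMod N → ℂ :=
  Md N l (Tr N p x)

/-- Inner product, conjugate linear in the first argument. -/
noncomputable def inn (N : ℕ) [NeZero N] (x y : ZMod N → ℂ) : ℂ :=
  ∑ j : ZMod N, (starRingEnd ℂ) (x j) * y j

/-- The discrete Fourier transform `x̂(j) = ∑_n x(n) ω^{-nj}`. -/
noncomputable def dft (N : ℕ) [NeZero N] (x : ZMod N → ℂ) : ZMod N → ℂ :=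
  fun j => ∑ n : ZMod N, x n * gw N (-(n * j))

/-- `x` is `k`-sparse in the Fourier basis: `x(n) = ∑_j z(j) ω^{nj}` for some
`z` with `‖z‖₀ ≤ k`. -/
noncomputable def FourierSparse (N : ℕ) [NeZero N] (k : ℕ) (x : ZMod N → ℂ) : Prop :=
  ∃ z : ZMod N → ℂ, Set.ncard {j | z j ≠ 0} ≤ k ∧
    ∀ n : ZMod N, x n = ∑ j : ZMod N, z j * gw N (n * j)

set_option linter.unusedSectionVars false
set_option maxHeartbeats 2000000

variable {N : ℕ} [NeZero N]

-- ===== basic gw API (already tested) =====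
lemma hNC : (N : ℂ) ≠ 0 := Nat.cast_ne_zero.mpr (NeZero.ne N)

lemma zeta_prim : IsPrimitiveRoot (Complex.exp (2 * Real.pi * Complex.I / N)) N :=
  Complex.isPrimitiveRoot_exp N (NeZero.ne N)

lemma gw_eq_pow (m : ZMod N) : gw N m = Complex.exp (2 * Real.pi * Complex.I / N) ^ m.val := by
  rw [gw, ← Complex.exp_nat_mul]; ring_nf

lemma zeta_pow_N : (Complex.exp (2 * Real.pi * Complex.I / N)) ^ N = 1 := zeta_prim.pow_eq_one

lemma gw_add (a b : ZMod N) : gw N (a + b) = gw N a * gw N b := by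
  rw [gw_eq_pow, gw_eq_pow, gw_eq_pow, ← pow_add]
  have h : (a.val + b.val) % N = (a + b).val := (ZMod.val_add a b).symm
  conv_rhs => rw [← Nat.div_add_mod (a.val + b.val) N, h]
  rw [pow_add, pow_mul, zeta_pow_N, one_pow, one_mul]

lemma gw_mul (a b : ZMod N) : gw N a * gw N b = gw N (a + b) := (gw_add a b).symm

lemma gw_zero : gw N 0 = 1 := by
  rw [gw_eq_pow, ZMod.val_zero, pow_zero]

lemma gw_neg_mul (a : ZMod N) : gw N (-a) * gw N a = 1 := by
  rw [← gw_add, neg_add_cancel, gw_zero]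

lemma gw_ne_zero (a : ZMod N) : gw N a ≠ 0 := by
  rw [gw]; exact Complex.exp_ne_zero _

lemma gw_abs (a : ZMod N) : ‖gw N a‖ = 1 := by
  have h : 2 * Real.pi * Complex.I * (a.val : ℂ) / N = ((2 * Real.pi * a.val / N : ℝ) : ℂ) * Complex.I := by
    push_cast; ring
  rw [gw, h, Complex.norm_exp_ofReal_mul_I]

lemma gw_conj (a : ZMod N) : (starRingEnd ℂ) (gw N a) = gw N (-a) := by
  have h1 : (starRingEnd ℂ) (gw N a) * gw N a = 1 := by
    rw [← Complex.normSq_eq_conj_mul_self, Complex.normSq_eq_norm_sq, gw_abs, one_pow]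
    norm_num
  exact mul_right_cancel₀ (gw_ne_zero a) (h1.trans (gw_neg_mul a).symm)

lemma gw_eq_one_iff (a : ZMod N) : gw N a = 1 ↔ a = 0 := by
  rw [gw_eq_pow, zeta_prim.pow_eq_one_iff_dvd]
  constructor
  · intro h
    have hv : a.val = 0 := Nat.eq_zero_of_dvd_of_lt h (ZMod.val_lt a)
    exact (ZMod.val_eq_zero a).mp hv
  · intro h; rw [h, ZMod.val_zero]; exact dvd_zero N

lemma gw_natCast_mul (i : ℕ) (a : ZMod N) : gw N ((i : ZMod N) * a) = gw N a ^ i := by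
  induction i with
  | zero => simp [gw_zero]
  | succ n ih => push_cast; rw [add_mul, one_mul, gw_add, ih, pow_succ]

lemma sum_zmod_eq_range (f : ZMod N → ℂ) : ∑ n : ZMod N, f n = ∑ i ∈ Finset.range N, f (i : ZMod N) := by
  apply Finset.sum_nbij' (i := fun n : ZMod N => n.val) (j := fun i : ℕ => (i : ZMod N))
  · intro a _; exact Finset.mem_range.mpr (ZMod.val_lt a)
  · intro i _; exact Finset.mem_univ _
  · intro a _; exact ZMod.natCast_rightInverse a
  · intro i hi; exact ZMod.val_cast_of_lt (Finset.mem_range.mp hi)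
  · intro a _; rw [ZMod.natCast_rightInverse a]

lemma sum_gw (a : ZMod N) : ∑ n : ZMod N, gw N (n * a) = if a = 0 then (N : ℂ) else 0 := by
  split_ifs with h
  · subst h; simp [gw_zero]
  · rw [sum_zmod_eq_range]
    simp_rw [gw_natCast_mul]
    rw [geom_sum_eq (fun hc => h ((gw_eq_one_iff a).mp hc))]
    have : gw N a ^ N = 1 := by
      rw [← gw_natCast_mul, ZMod.natCast_self, zero_mul, gw_zero]
    rw [this, sub_self, zero_div]

-- ===== ambiguity function of g =====

noncomputable def Gfun (N : ℕ) [NeZero N] (g : ZMod N → ℂ) (d m : ZMod N) : ℂ :=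
  ∑ s : ZMod N, (starRingEnd ℂ) (g s) * g (s + d) * gw N (s * m)

lemma inn_Pig_eq_Gfun (g : ZMod N → ℂ) (p l : ZMod N) :
    inn N g (Pig N p l g) = Gfun N g (-p) l := by
  unfold inn Pig Md Tr Gfun
  apply Finset.sum_congr rfl
  intro s _
  rw [show s + -p = s - p by ring, show l * s = s * l by ring]
  ring

lemma Pfun_eq (g x : ZMod N → ℂ) (q l : ZMod N) :
    inn N x (Pig N q l g) = ∑ n : ZMod N, (starRingEnd ℂ) (x n) * gw N (l * n) * g (n - q) := by
  unfold inn Pig Md Tr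
  exact Finset.sum_congr rfl (fun n _ => by ring)

lemma conj_Pfun (g x : ZMod N → ℂ) (q l : ZMod N) :
    (starRingEnd ℂ) (inn N x (Pig N q l g))
      = ∑ n : ZMod N, x n * gw N (-(l * n)) * (starRingEnd ℂ) (g (n - q)) := by
  rw [Pfun_eq, map_sum]
  apply Finset.sum_congr rfl
  intro n _
  rw [map_mul, map_mul, gw_conj, Complex.conj_conj]

-- the master identity, part 1
lemma dft_normSq (g x : ZMod N → ℂ) (l m : ZMod N) :
    dft N (fun q => (starRingEnd ℂ) (inn N x (Pig N q l g)) * inn N x (Pig N q l g)) m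
      = ∑ n : ZMod N, ∑ n' : ZMod N,
          x n * (starRingEnd ℂ) (x n') * gw N (l * n' - l * n - n * m) * Gfun N g (n' - n) m := by
  unfold dft
  simp_rw [conj_Pfun, Pfun_eq, Finset.sum_mul_sum, Finset.sum_mul]
  rw [Finset.sum_comm]
  apply Finset.sum_congr rfl
  intro n _
  rw [Finset.sum_comm]
  apply Finset.sum_congr rfl
  intro n' _
  -- goal: ∑ q, (x n * gw (-(l*n)) * conj (g (n-q))) * (conj (x n') * gw (l*n') * g (n'-q)) * gw (-(q*m))
  --     = x n * conj (x n') * gw (l*n' - l*n - n*m) * Gfun g (n'-n) m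
  rw [Gfun, Finset.mul_sum]
  apply Finset.sum_nbij' (i := fun q : ZMod N => n - q) (j := fun s : ZMod N => n - s)
  · intro a _; exact Finset.mem_univ _
  · intro a _; exact Finset.mem_univ _
  · intro a _; ring
  · intro a _; ring
  · intro q _
    have h2' : n' - q = (n - q) + (n' - n) := by ring
    rw [h2']
    have hgw : gw N (-(l * n)) * gw N (l * n') * gw N (-(q * m))
        = gw N (l * n' - l * n - n * m) * gw N ((n - q) * m) := by
      rw [gw_mul, gw_mul, gw_mul]
      congr 1; ring
    linear_combination (x n * (starRingEnd ℂ) (x n') * (starRingEnd ℂ) (g (n - q)) *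
      g ((n - q) + (n' - n))) * hgw


lemma conj_x_eq (z x : ZMod N → ℂ) (hx : ∀ n, x n = ∑ j : ZMod N, z j * gw N (n * j))
    (n : ZMod N) : (starRingEnd ℂ) (x n) = ∑ j : ZMod N, (starRingEnd ℂ) (z j) * gw N (-(n * j)) := by
  rw [hx n, map_sum]
  exact Finset.sum_congr rfl (fun j _ => by rw [map_mul, gw_conj])

lemma key_sum (g z x : ZMod N → ℂ) (hx : ∀ n, x n = ∑ j : ZMod N, z j * gw N (n * j))
    (l m d : ZMod N) :
    (∑ n : ZMod N, x n * (starRingEnd ℂ) (x (n + d)) * gw N (l * d - n * m))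
      = (N : ℂ) * ∑ j : ZMod N, z j * (starRingEnd ℂ) (z (j - m)) * gw N (d * (l - j + m)) := by
  have expand : ∀ n : ZMod N, x n * (starRingEnd ℂ) (x (n + d)) * gw N (l * d - n * m)
      = ∑ j : ZMod N, ∑ j' : ZMod N,
          z j * (starRingEnd ℂ) (z j') * gw N (l * d - d * j') * gw N (n * (j - j' - m)) := by
    intro n
    rw [hx n, conj_x_eq z x hx (n + d), Finset.sum_mul_sum, Finset.sum_mul]
    apply Finset.sum_congr rfl
    intro j _
    rw [Finset.sum_mul]
    apply Finset.sum_congr rfl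
    intro j' _
    have hgw : gw N (n * j) * gw N (-((n + d) * j')) * gw N (l * d - n * m)
        = gw N (l * d - d * j') * gw N (n * (j - j' - m)) := by
      rw [gw_mul, gw_mul, gw_mul]; congr 1; ring
    linear_combination (z j * (starRingEnd ℂ) (z j')) * hgw
  calc ∑ n : ZMod N, x n * (starRingEnd ℂ) (x (n + d)) * gw N (l * d - n * m)
      = ∑ j : ZMod N, ∑ j' : ZMod N, z j * (starRingEnd ℂ) (z j') * gw N (l * d - d * j')
          * (∑ n : ZMod N, gw N (n * (j - j' - m))) := by
        simp_rw [expand]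
        rw [Finset.sum_comm]
        apply Finset.sum_congr rfl
        intro j _
        rw [Finset.sum_comm]
        apply Finset.sum_congr rfl
        intro j' _
        rw [Finset.mul_sum]
    _ = (N : ℂ) * ∑ j : ZMod N, z j * (starRingEnd ℂ) (z (j - m)) * gw N (d * (l - j + m)) := by
        rw [Finset.mul_sum]
        apply Finset.sum_congr rfl
        intro j _
        rw [Finset.sum_eq_single (j - m)]
        · rw [sum_gw, if_pos (by ring)]
          rw [show l * d - d * (j - m) = d * (l - j + m) by ring]
          ring
        · intro j' _ hne
          rw [sum_gw, if_neg, mul_zero]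
          intro hc
          exact hne (by linear_combination j - m - hc)
        · intro h; exact absurd (Finset.mem_univ _) h
  done

lemma dft_normSq_sparse (g z x : ZMod N → ℂ)
    (hx : ∀ n, x n = ∑ j : ZMod N, z j * gw N (n * j)) (l m : ZMod N) :
    dft N (fun q => (starRingEnd ℂ) (inn N x (Pig N q l g)) * inn N x (Pig N q l g)) m
      = (N : ℂ) * ∑ j : ZMod N, z j * (starRingEnd ℂ) (z (j - m)) *
          ∑ d : ZMod N, gw N (d * (l - j + m)) * Gfun N g d m := by
  rw [dft_normSq]
  have step1 : ∀ n : ZMod N,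
      (∑ n' : ZMod N, x n * (starRingEnd ℂ) (x n') * gw N (l * n' - l * n - n * m) * Gfun N g (n' - n) m)
        = ∑ d : ZMod N, x n * (starRingEnd ℂ) (x (n + d)) * gw N (l * d - n * m) * Gfun N g d m := by
    intro n
    apply Finset.sum_nbij' (i := fun n' : ZMod N => n' - n) (j := fun d : ZMod N => n + d)
    · intro a _; exact Finset.mem_univ _
    · intro a _; exact Finset.mem_univ _
    · intro a _; ring
    · intro a _; ring
    · intro n' _
      rw [show n + (n' - n) = n' by ring, show l * (n' - n) - n * m = l * n' - l * n - n * m by ring]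
  simp_rw [step1]
  rw [Finset.sum_comm]
  calc ∑ d : ZMod N, ∑ n : ZMod N, x n * (starRingEnd ℂ) (x (n + d)) * gw N (l * d - n * m) * Gfun N g d m
      = ∑ d : ZMod N, ((N : ℂ) * ∑ j : ZMod N, z j * (starRingEnd ℂ) (z (j - m)) * gw N (d * (l - j + m))) * Gfun N g d m := by
        apply Finset.sum_congr rfl
        intro d _
        rw [← Finset.sum_mul, key_sum g z x hx l m d]
    _ = ∑ d : ZMod N, ∑ j : ZMod N, (N : ℂ) * (z j * (starRingEnd ℂ) (z (j - m)) * (gw N (d * (l - j + m)) * Gfun N g d m)) := by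
        apply Finset.sum_congr rfl
        intro d _
        rw [Finset.mul_sum, Finset.sum_mul]
        exact Finset.sum_congr rfl (fun j _ => by ring)
    _ = (N : ℂ) * ∑ j : ZMod N, z j * (starRingEnd ℂ) (z (j - m)) *
          ∑ d : ZMod N, gw N (d * (l - j + m)) * Gfun N g d m := by
        rw [Finset.sum_comm, Finset.mul_sum]
        apply Finset.sum_congr rfl
        intro j _
        rw [Finset.mul_sum, Finset.mul_sum]


lemma ncard_eq_filter (p : ZMod N → Prop) [DecidablePred p] :
    Set.ncard {x | p x} = (Finset.univ.filter p).card := by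
  rw [← Set.ncard_coe_finset]
  congr 1
  ext q; simp

lemma dft_sub (f h : ZMod N → ℂ) (m : ZMod N) :
    dft N (fun q => f q - h q) m = dft N f m - dft N h m := by
  unfold dft
  rw [← Finset.sum_sub_distrib]
  exact Finset.sum_congr rfl (fun n _ => by ring)

lemma ncard_le_of_zero_on {f : ZMod N → ℂ} {s : Finset (ZMod N)} (h : ∀ q ∈ s, f q = 0) :
    (Set.ncard {q | f q ≠ 0} : ℤ) ≤ (N : ℤ) - s.card := by
  classical
  have h1 : Set.ncard {q | f q ≠ 0} ≤ (Finset.univ \ s).card := by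
    rw [← Set.ncard_coe_finset]
    apply Set.ncard_le_ncard _ (Finset.finite_toSet _)
    intro q hq
    simp only [Finset.coe_sdiff, Finset.coe_univ, Set.mem_diff, Set.mem_univ, true_and,
      Finset.mem_coe]
    intro hqs; exact hq (h q hqs)
  have h2 : (Finset.univ \ s).card = N - s.card := by
    rw [Finset.card_sdiff_of_subset (Finset.subset_univ s), Finset.card_univ, ZMod.card]
  have h3 : s.card ≤ Finset.univ.card := Finset.card_le_univ s
  have h4 : (Finset.univ : Finset (ZMod N)).card = N := by rw [Finset.card_univ, ZMod.card]
  rw [h2] at h1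
  omega

lemma ncard_le_of_supp_subset {f : ZMod N → ℂ} {s : Finset (ZMod N)}
    (h : ∀ q, f q ≠ 0 → q ∈ s) : Set.ncard {q | f q ≠ 0} ≤ s.card := by
  rw [← Set.ncard_coe_finset]
  exact Set.ncard_le_ncard (fun q hq => h q hq) (Finset.finite_toSet _)

-- support set of the ambiguity function of g, in `d`-form
lemma Gfun_supp_card (g : ZMod N → ℂ) (m : ZMod N) [DecidableEq (ZMod N)]
    [DecidablePred fun d => Gfun N g d m ≠ 0]
    [DecidablePred fun p => inn N g (Pig N p m g) ≠ 0] :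
    (Finset.univ.filter fun d => Gfun N g d m ≠ 0).card
      = (Finset.univ.filter fun p => inn N g (Pig N p m g) ≠ 0).card := by
  have hset : (Finset.univ.filter fun d => Gfun N g d m ≠ 0)
      = (Finset.univ.filter fun p => inn N g (Pig N p m g) ≠ 0).image (fun p => -p) := by
    ext d
    simp only [Finset.mem_filter, Finset.mem_univ, true_and, Finset.mem_image]
    constructor
    · intro hd
      exact ⟨-d, by rwa [inn_Pig_eq_Gfun, neg_neg], neg_neg d⟩
    · rintro ⟨p, hp, rfl⟩
      rwa [inn_Pig_eq_Gfun] at hp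
  rw [hset, Finset.card_image_of_injective _ neg_injective]


/-- Phase retrieval of Fourier-sparse signals from partial Gabor measurements:
under the uncertainty principle with constant `θ` and the condition
`θ + 2k + 1 ≤ ‖(⟨g, g_{·,ℓ}⟩)‖₀ ≤ k̂` for every `ℓ`, the measurements indexed
by `A × B` with `|A| ≥ θ + (2k)² - 2k + 2` and `|B| ≥ θ + k̂ + 1` allow
`Fk`-sparse phase retrieval. -/
theorem Gabor_Fourier_sparse_phase_retrieval (N : ℕ) [NeZero N] (θ : ℤ) (k khat : ℕ)
    (g : ZMod N → ℂ)
    (hUP : ∀ f : ZMod N → ℂ, f ≠ 0 →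
      (N : ℤ) - θ ≤ (Set.ncard {n | f n ≠ 0} : ℤ) + (Set.ncard {j | dft N f j ≠ 0} : ℤ))
    (hg : ∀ l : ZMod N,
      θ + 2 * (k : ℤ) + 1 ≤ (Set.ncard {p | inn N g (Pig N p l g) ≠ 0} : ℤ) ∧
      (Set.ncard {p | inn N g (Pig N p l g) ≠ 0} : ℤ) ≤ (khat : ℤ))
    (A B : Finset (ZMod N))
    (hA : θ + (2 * (k : ℤ)) ^ 2 - 2 * (k : ℤ) + 2 ≤ (A.card : ℤ))
    (hB : θ + (khat : ℤ) + 1 ≤ (B.card : ℤ)) :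
    ∀ x y : ZMod N → ℂ, FourierSparse N k x → FourierSparse N k y →
      (∀ q ∈ A, ∀ j ∈ B,
        ‖inn N x (Pig N q j g)‖ = ‖inn N y (Pig N q j g)‖) →
      ∃ c : ℂ, ‖c‖ = 1 ∧ x = c • y := by
  classical
  intro x y hx hy hmeas
  obtain ⟨z, hz0, hzx⟩ := hx
  obtain ⟨w, hw0, hwy⟩ := hy
  set a : ZMod N → ZMod N → ℂ := fun m j =>
    z j * (starRingEnd ℂ) (z (j - m)) - w j * (starRingEnd ℂ) (w (j - m)) with ha
  set D : ZMod N → ZMod N → ℂ := fun l q =>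
    (starRingEnd ℂ) (inn N x (Pig N q l g)) * inn N x (Pig N q l g)
      - (starRingEnd ℂ) (inn N y (Pig N q l g)) * inn N y (Pig N q l g) with hD
  -- the support Finset of the coefficients
  set U : Finset (ZMod N) := Finset.univ.filter (fun j => z j ≠ 0 ∨ w j ≠ 0) with hUdef
  have hUcard : (U.card : ℤ) ≤ 2 * (k : ℤ) := by
    have hsub : U ⊆ (Finset.univ.filter fun j => z j ≠ 0) ∪ (Finset.univ.filter fun j => w j ≠ 0) := by
      intro j hj
      simp only [hUdef, Finset.mem_filter, Finset.mem_univ, true_and, Finset.mem_union] at hj ⊢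
      exact hj
    have h1 := le_trans (Finset.card_le_card hsub) (Finset.card_union_le _ _)
    rw [ncard_eq_filter] at hz0 hw0
    have : U.card ≤ 2 * k := by omega
    exact_mod_cast this
  have dftD : ∀ l m : ZMod N, dft N (D l) m
      = (N : ℂ) * ∑ j : ZMod N, a m j *
          ∑ d : ZMod N, gw N (d * (l - j + m)) * Gfun N g d m := by
    intro l m
    calc dft N (D l) m
        = dft N (fun q => (starRingEnd ℂ) (inn N x (Pig N q l g)) * inn N x (Pig N q l g)) m
          - dft N (fun q => (starRingEnd ℂ) (inn N y (Pig N q l g)) * inn N y (Pig N q l g)) m :=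
          dft_sub _ _ m
      _ = _ := by
          rw [dft_normSq_sparse g z x hzx l m, dft_normSq_sparse g w y hwy l m, ← mul_sub,
            ← Finset.sum_sub_distrib]
          congr 1
          apply Finset.sum_congr rfl
          intro j _
          simp only [ha]
          ring
  -- Step A : the measurements agree for all q, for l ∈ B
  have hD0 : ∀ l ∈ B, ∀ q : ZMod N, D l q = 0 := by
    intro l hl
    by_contra hcon
    push_neg at hcon
    obtain ⟨q0, hq0⟩ := hcon
    have hfne : D l ≠ 0 := fun hf => hq0 (congrFun hf q0)
    have hup := hUP (D l) hfne
    have hzero : ∀ q ∈ A, D l q = 0 := by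
      intro q hq
      have h := hmeas q hq l hl
      have hr : Complex.normSq (inn N x (Pig N q l g)) = Complex.normSq (inn N y (Pig N q l g)) := by
        rw [← Complex.sq_norm, ← Complex.sq_norm, h]
      simp only [hD]
      rw [← Complex.normSq_eq_conj_mul_self, ← Complex.normSq_eq_conj_mul_self, hr, sub_self]
    have card1 := ncard_le_of_zero_on hzero
    set UU : Finset (ZMod N) := insert 0 (U.offDiag.image fun p => p.1 - p.2) with hUU
    have hUUcard : (UU.card : ℤ) ≤ (2 * (k : ℤ)) ^ 2 - 2 * (k : ℤ) + 1 := by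
      have h1 : UU.card ≤ 1 + U.offDiag.card :=
        le_trans (Finset.card_insert_le _ _) (by
          have := Finset.card_image_le (s := U.offDiag) (f := fun p => p.1 - p.2)
          omega)
      rw [Finset.offDiag_card] at h1
      have hU2 : U.card ≤ 2 * k := by exact_mod_cast hUcard
      have e1 : U.card * U.card - U.card = U.card * (U.card - 1) := by
        rw [← Nat.pred_eq_sub_one, Nat.mul_pred]
      have e3 : 2 * k * (2 * k) - 2 * k = 2 * k * (2 * k - 1) := by
        rw [← Nat.pred_eq_sub_one, Nat.mul_pred]
      have e2 : U.card * (U.card - 1) ≤ 2 * k * (2 * k - 1) :=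
        Nat.mul_le_mul hU2 (Nat.sub_le_sub_right hU2 1)
      have h2 : U.card * U.card - U.card ≤ 2 * k * (2 * k) - 2 * k := by
        rw [e1, e3]; exact e2
      have h3 : UU.card ≤ 1 + (2 * k * (2 * k) - 2 * k) := by omega
      have h4 : 2 * k ≤ 2 * k * (2 * k) := by
        rcases Nat.eq_zero_or_pos k with rfl | hk
        · simp
        · exact Nat.le_mul_of_pos_left _ (by positivity)
      calc (UU.card : ℤ) ≤ ((1 + (2 * k * (2 * k) - 2 * k) : ℕ) : ℤ) := by exact_mod_cast h3
        _ = (2 * (k : ℤ)) ^ 2 - 2 * (k : ℤ) + 1 := by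
            rw [Nat.cast_add, Nat.cast_sub h4]
            push_cast
            ring
    have hsupp2 : ∀ m : ZMod N, dft N (D l) m ≠ 0 → m ∈ UU := by
      intro m hm
      by_contra hmUU
      apply hm
      rw [dftD l m]
      have hz : ∀ j : ZMod N, a m j = 0 := by
        intro j
        by_contra haj
        have hj1 : j ∈ U := by
          simp only [hUdef, Finset.mem_filter, Finset.mem_univ, true_and]
          by_contra hn
          push_neg at hn
          apply haj
          simp only [ha, hn.1, hn.2, zero_mul, sub_zero]
        have hj2 : j - m ∈ U := by
          simp only [hUdef, Finset.mem_filter, Finset.mem_univ, true_and]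
          by_contra hn
          push_neg at hn
          apply haj
          simp only [ha, hn.1, hn.2, map_zero, mul_zero, sub_zero]
        apply hmUU
        rcases eq_or_ne m 0 with h0 | h0
        · rw [hUU, h0]; exact Finset.mem_insert_self 0 _
        · rw [hUU]
          apply Finset.mem_insert_of_mem
          apply Finset.mem_image.mpr
          refine ⟨(j, j - m), Finset.mem_offDiag.mpr ⟨hj1, hj2, ?_⟩, by show j - (j - m) = m; ring⟩
          intro he
          apply h0
          have he' : j = j - m := he
          have h2 : m = j - (j - m) := by ring
          rw [← he', sub_self] at h2
          exact h2
      rw [Finset.sum_eq_zero (fun j _ => by rw [hz j, zero_mul]), mul_zero]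
    have card2 : (Set.ncard {m | dft N (D l) m ≠ 0} : ℤ) ≤ (UU.card : ℤ) := by
      exact_mod_cast ncard_le_of_supp_subset hsupp2
    linarith
  -- Step B : the full mask identity
  have hc0 : ∀ m d : ZMod N,
      Gfun N g d m * ((N : ℂ) * ∑ j : ZMod N, a m j * gw N (d * (m - j))) = 0 := by
    intro m
    set c : ZMod N → ℂ :=
      fun d => Gfun N g d m * ((N : ℂ) * ∑ j : ZMod N, a m j * gw N (d * (m - j))) with hc
    suffices hcz : c = 0 by
      intro d
      exact congrFun hcz d
    by_contra hcne
    have hup := hUP c hcne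
    have hdftc : ∀ l ∈ B, dft N c (-l) = 0 := by
      intro l hl
      have h1 : dft N c (-l) = dft N (D l) m := by
        rw [dftD l m]
        show ∑ d : ZMod N, c d * gw N (-(d * -l)) = _
        calc ∑ d : ZMod N, c d * gw N (-(d * -l))
            = ∑ d : ZMod N, ∑ j : ZMod N,
                (N : ℂ) * (a m j * (gw N (d * (l - j + m)) * Gfun N g d m)) := by
              apply Finset.sum_congr rfl
              intro d _
              have hgw : ∀ j : ZMod N, gw N (d * (m - j)) * gw N (-(d * -l)) = gw N (d * (l - j + m)) := by
                intro j
                rw [gw_mul]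
                congr 1
                ring
              simp only [hc]
              calc Gfun N g d m * ((N : ℂ) * ∑ j : ZMod N, a m j * gw N (d * (m - j))) * gw N (-(d * -l))
                  = ∑ j : ZMod N, Gfun N g d m * ((N : ℂ) * (a m j * gw N (d * (m - j)))) * gw N (-(d * -l)) := by
                    rw [Finset.mul_sum, Finset.mul_sum, Finset.sum_mul]
                _ = ∑ j : ZMod N, (N : ℂ) * (a m j * (gw N (d * (l - j + m)) * Gfun N g d m)) := by
                    apply Finset.sum_congr rfl
                    intro j _
                    linear_combination ((N : ℂ) * a m j * Gfun N g d m) * hgw j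
          _ = (N : ℂ) * ∑ j : ZMod N, a m j *
                ∑ d : ZMod N, gw N (d * (l - j + m)) * Gfun N g d m := by
              rw [Finset.sum_comm, Finset.mul_sum]
              apply Finset.sum_congr rfl
              intro j _
              rw [← Finset.mul_sum, ← Finset.mul_sum]
      rw [h1]
      show ∑ q : ZMod N, D l q * gw N (-(q * m)) = 0
      exact Finset.sum_eq_zero (fun q _ => by rw [hD0 l hl q, zero_mul])
    have hsupp1 : ∀ d : ZMod N, c d ≠ 0 → d ∈ Finset.univ.filter (fun d => Gfun N g d m ≠ 0) := by
      intro d hd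
      simp only [Finset.mem_filter, Finset.mem_univ, true_and]
      intro hG
      apply hd
      simp only [hc, hG, zero_mul]
    have card1 : (Set.ncard {d | c d ≠ 0} : ℤ) ≤ (khat : ℤ) := by
      have h1 := ncard_le_of_supp_subset hsupp1
      have h2 := (hg m).2
      rw [ncard_eq_filter] at h2
      rw [Gfun_supp_card g m] at h1
      calc (Set.ncard {d | c d ≠ 0} : ℤ)
          ≤ ((Finset.univ.filter fun p => inn N g (Pig N p m g) ≠ 0).card : ℤ) := by exact_mod_cast h1
        _ ≤ (khat : ℤ) := h2
    have hsupp2 : ∀ j ∈ B.image (fun l => -l), dft N c j = 0 := by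
      intro j hj
      obtain ⟨l, hl, rfl⟩ := Finset.mem_image.mp hj
      exact hdftc l hl
    have card2 := ncard_le_of_zero_on hsupp2
    rw [Finset.card_image_of_injective B neg_injective] at card2
    linarith
  -- Step C : equality of the rank-one coefficient matrices
  have ha0 : ∀ m j : ZMod N, a m j = 0 := by
    intro m
    suffices h : a m = 0 by intro j; exact congrFun h j
    by_contra hbne
    have hup := hUP (a m) hbne
    have hdftb : ∀ d ∈ Finset.univ.filter (fun d => Gfun N g d m ≠ 0), dft N (a m) d = 0 := by
      intro d hd
      simp only [Finset.mem_filter, Finset.mem_univ, true_and] at hd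
      have h2 : (N : ℂ) * ∑ j : ZMod N, a m j * gw N (d * (m - j)) = 0 :=
        (mul_eq_zero.mp (hc0 m d)).resolve_left hd
      have h3 : ∑ j : ZMod N, a m j * gw N (d * (m - j)) = 0 :=
        (mul_eq_zero.mp h2).resolve_left hNC
      have h4 : ∑ j : ZMod N, a m j * gw N (d * (m - j)) = gw N (d * m) * dft N (a m) d := by
        show _ = gw N (d * m) * ∑ j : ZMod N, a m j * gw N (-(j * d))
        rw [Finset.mul_sum]
        apply Finset.sum_congr rfl
        intro j _
        have hgw : gw N (d * m) * gw N (-(j * d)) = gw N (d * (m - j)) := by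
          rw [gw_mul]; congr 1; ring
        linear_combination (-(a m j)) * hgw
      rw [h4] at h3
      exact (mul_eq_zero.mp h3).resolve_left (gw_ne_zero _)
    have card2 := ncard_le_of_zero_on hdftb
    have hSg : (θ : ℤ) + 2 * (k : ℤ) + 1
        ≤ ((Finset.univ.filter fun d => Gfun N g d m ≠ 0).card : ℤ) := by
      rw [Gfun_supp_card g m]
      have h1 := (hg m).1
      rw [ncard_eq_filter] at h1
      exact h1
    have hsupp1 : ∀ j : ZMod N, a m j ≠ 0 → j ∈ U := by
      intro j hj
      simp only [hUdef, Finset.mem_filter, Finset.mem_univ, true_and]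
      by_contra hn
      push_neg at hn
      apply hj
      simp only [ha, hn.1, hn.2, zero_mul, sub_zero]
    have card1 : (Set.ncard {j | a m j ≠ 0} : ℤ) ≤ (U.card : ℤ) := by
      exact_mod_cast ncard_le_of_supp_subset hsupp1
    linarith
  -- Step D : conclude
  have key : ∀ j j' : ZMod N, z j * (starRingEnd ℂ) (z j') = w j * (starRingEnd ℂ) (w j') := by
    intro j j'
    have h := ha0 (j - j') j
    simp only [ha] at h
    rw [show j - (j - j') = j' by ring] at h
    exact sub_eq_zero.mp h
  by_cases hw : ∀ j, w j = 0
  · have hzz : ∀ j, z j = 0 := by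
      intro j
      have h := key j j
      rw [hw j, zero_mul] at h
      rcases mul_eq_zero.mp h with h1 | h1
      · exact h1
      · simpa using h1
    refine ⟨1, by simp, ?_⟩
    funext n
    simp only [Pi.smul_apply, smul_eq_mul, one_mul]
    rw [hzx n, hwy n]
    apply Finset.sum_congr rfl
    intro j _
    rw [hzz j, hw j]
  · push_neg at hw
    obtain ⟨j0, hj0⟩ := hw
    have habs : ‖z j0‖ = ‖w j0‖ := by
      have h := key j0 j0
      have h1 : ((Complex.normSq (z j0) : ℝ) : ℂ) = ((Complex.normSq (w j0) : ℝ) : ℂ) := by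
        rw [Complex.normSq_eq_conj_mul_self, Complex.normSq_eq_conj_mul_self]
        linear_combination h
      have h2 : Complex.normSq (z j0) = Complex.normSq (w j0) := by exact_mod_cast h1
      rw [← Real.sqrt_sq (norm_nonneg (z j0)), ← Real.sqrt_sq (norm_nonneg (w j0)), Complex.sq_norm,
        Complex.sq_norm, h2]
    have hz0' : z j0 ≠ 0 := by
      intro h
      apply hj0
      have := habs
      rw [h, norm_zero] at this
      exact (norm_eq_zero.mp this.symm)
    refine ⟨z j0 / w j0, ?_, ?_⟩
    · rw [norm_div, habs, div_self (norm_ne_zero_iff.mpr hj0)]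
    · funext n
      have hzj : ∀ j, z j = (z j0 / w j0) * w j := by
        intro j
        have h1 := key j j0
        have h3 : (starRingEnd ℂ) (z j0) * z j0 = (starRingEnd ℂ) (w j0) * w j0 := by
          rw [← Complex.normSq_eq_conj_mul_self, ← Complex.normSq_eq_conj_mul_self,
            ← Complex.sq_norm, ← Complex.sq_norm, habs]
        have hcwj0 : (starRingEnd ℂ) (w j0) ≠ 0 := by
          simpa using hj0
        have h4 : (starRingEnd ℂ) (w j0) * (z j * w j0) = (starRingEnd ℂ) (w j0) * (w j * z j0) := by
          linear_combination z j0 * h1 - z j * h3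
        have h5 := mul_left_cancel₀ hcwj0 h4
        field_simp
        linear_combination h5
      rw [hzx n]
      simp only [Pi.smul_apply, smul_eq_mul]
      rw [hwy n, Finset.mul_sum]
      apply Finset.sum_congr rfl
      intro j _
      rw [hzj j]
      ring
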